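/- If the connected graph G has r independent cycles (i.e., r = |E| - |V| + 1, where |E| and |V| are the numbers of edges and vertices of G), then for any set S of edges of G and any two states i, j, |∑_{{m,n}∈S} ∂ ln(π_i/π_j) / ∂B_mn| ≤ r · tanh(F_{i↔j}/4). -/

import Mathlib

open Finset

attribute [local instance] Classical.propDecidable

/-- The transition graph of a rate matrix: an edge between `i ≠ j` whenever
both rates are positive. -/
def transGraph {V : Type*} (W : V → V → ℝ) : SimpleGraph V where
  Adj i j := i ≠ j ∧ 0 < W i j ∧ 0 < W j i
  symm := ⟨fun i j ⟨h, h1, h2⟩ => ⟨h.symm, h2, h1⟩⟩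
  loopless := ⟨fun i ⟨h, _, _⟩ => h rfl⟩

/-- `T` is a spanning tree of `G`. -/
def IsSpanningTree {V : Type*} (G T : SimpleGraph V) : Prop := T ≤ G ∧ T.IsTree

/-- Weight of spanning tree `T` rooted at `r`: product over the edges of `T`,
each directed towards `r`, of the corresponding rate (`W i j` is the rate of
the jump `j → i`). -/
noncomputable def treeWeight {V : Type*} [Fintype V] (W : V → V → ℝ)
    (T : SimpleGraph V) (r : V) : ℝ :=
  ∏ p ∈ Finset.univ.filter
      (fun p : V × V => T.Adj p.1 p.2 ∧ T.dist p.2 r + 1 = T.dist p.1 r),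
    W p.2 p.1

/-- Sum of rooted-tree weights over all spanning trees of `G`, rooted at `k`. -/
noncomputable def sumTrees {V : Type*} [Fintype V] [DecidableEq V] (W : V → V → ℝ)
    (G : SimpleGraph V) (k : V) : ℝ :=
  ∑ T ∈ Finset.univ.filter (fun T : SimpleGraph V => IsSpanningTree G T),
    treeWeight W T k

/-- Steady state via matrix-tree formula. -/
noncomputable def mttPi {V : Type*} [Fintype V] [DecidableEq V] (W : V → V → ℝ)
    (G : SimpleGraph V) (k : V) : ℝ :=
  sumTrees W G k / ∑ l : V, sumTrees W G l

/-- Weight of a walk: product of the rates of its directed edges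
(a step `a → b` has rate `W b a`). -/
noncomputable def walkWeight {V : Type*} (W : V → V → ℝ) {G : SimpleGraph V} {u v : V}
    (p : G.Walk u v) : ℝ :=
  (p.darts.map (fun d => W d.snd d.fst)).prod

/-- Cycle force of a closed walk. -/
noncomputable def cycleForce {V : Type*} (W : V → V → ℝ) {G : SimpleGraph V} {u : V}
    (p : G.Walk u u) : ℝ :=
  Real.log (walkWeight W p / walkWeight W p.reverse)

/-- `Fmax`: the maximum of `|F_C|` over cycles `C` of `G` containing the
edge `{m,n}`; `0` if there is none. -/
noncomputable def Fmax {V : Type*} (W : V → V → ℝ) (G : SimpleGraph V) (m n : V) : ℝ :=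
  sSup {x : ℝ | ∃ (u : V) (p : G.Walk u u), p.IsCycle ∧ s(m, n) ∈ p.edges ∧
    x = |cycleForce W p|}

/-- `F_{i↔j}`: the maximum entropy produced going from `i` to `j` and back
along non-self-intersecting paths. -/
noncomputable def Fbtw {V : Type*} (W : V → V → ℝ) (G : SimpleGraph V) (i j : V) : ℝ :=
  sSup {x : ℝ | ∃ (p : G.Walk i j) (q : G.Walk j i), p.IsPath ∧ q.IsPath ∧
    x = |Real.log (walkWeight W p * walkWeight W q /
          (walkWeight W p.reverse * walkWeight W q.reverse))|}

/-- The parameterized rates `W_ij = exp(-(B_ij - E_j - F_ij/2))` on the edges of `G`. -/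
noncomputable def rates {V : Type*} (G : SimpleGraph V) (Bp : V → V → ℝ) (Ep : V → ℝ)
    (Fp : V → V → ℝ) : V → V → ℝ :=
  fun i j => if G.Adj i j then Real.exp (-(Bp i j - Ep j - Fp i j / 2)) else 0

/-- Steady state as a function of the parameters. -/
noncomputable def piP {V : Type*} [Fintype V] [DecidableEq V] (G : SimpleGraph V)
    (Bp : V → V → ℝ) (Ep : V → ℝ) (Fp : V → V → ℝ) (k : V) : ℝ :=
  mttPi (rates G Bp Ep Fp) G k

/-- Replace the symmetric edge parameter of the edge `{m,n}` by `t`. -/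
noncomputable def updB {V : Type*} (Bp : V → V → ℝ) (m n : V) (t : ℝ) : V → V → ℝ :=
  fun i j => if (i = m ∧ j = n) ∨ (i = n ∧ j = m) then t else Bp i j

/-- Add `t` to the symmetric edge parameters of all edges in `S`. -/
noncomputable def updBadd {V : Type*} (Bp : V → V → ℝ) (S : Set (Sym2 V)) (t : ℝ) : V → V → ℝ :=
  fun i j => if s(i, j) ∈ S then Bp i j + t else Bp i j

/-- Replace the antisymmetric edge parameter of the edge `{i,j}` by `t`
(and by `-t` in the reverse direction). -/
noncomputable def updF {V : Type*} (Fp : V → V → ℝ) (i j : V) (t : ℝ) : V → V → ℝ :=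
  fun a b => if a = i ∧ b = j then t else if a = j ∧ b = i then -t else Fp a b

/-- The full rate matrix, with diagonal entries fixed by conservation of probability. -/
noncomputable def fullW {V : Type*} [Fintype V] [DecidableEq V] (W : V → V → ℝ) :
    V → V → ℝ :=
  fun i j => if i = j then -∑ l ∈ Finset.univ.filter (fun l => l ≠ j), W l j else W i j


section AUX
open SimpleGraph

lemma chord {x y ρ : ℝ} (hy : 0 < y) (hyx : y < x) (hy1 : y ≤ 1) (h1x : 1 ≤ x)
    (hρy : y ≤ ρ) (hρx : ρ ≤ x) :
    max (ρ - 1) 0 ≤ (x - 1) / (x - y) * (ρ - y) := by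
  have hxy : (0:ℝ) < x - y := by linarith
  rcases le_or_gt ρ 1 with h | h
  · rw [max_eq_right (by linarith)]
    have h1 : 0 ≤ (x - 1) / (x - y) := div_nonneg (by linarith) hxy.le
    nlinarith
  · rw [max_eq_left (by linarith)]
    rw [div_mul_eq_mul_div, le_div_iff₀ hxy]
    nlinarith

lemma chordSum {c x y : ℝ} (hc : 1 ≤ c) (hy : 0 < y) (hyx : y < x) (hy1 : y ≤ 1) (h1x : 1 ≤ x)
    (hxc : x ≤ c^2 * y) : (x - 1) / (x - y) * (1 - y) ≤ (c - 1) / (c + 1) := by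
  have hxy : (0:ℝ) < x - y := by linarith
  rw [div_mul_eq_mul_div, div_le_div_iff₀ hxy (by linarith)]
  rcases eq_or_lt_of_le h1x with h | h
  · obtain rfl := h
    have : (c - 1) * (1 - y) ≥ 0 := mul_nonneg (by linarith) (by linarith)
    nlinarith
  · have ht : (1:ℝ) < c^2 * y := lt_of_lt_of_le h hxc
    nlinarith [mul_nonneg (sub_nonneg.2 hxc) (mul_nonneg (sub_nonneg.2 hc) (sub_nonneg.2 hy1)),
      mul_nonneg (sub_nonneg.2 h.le) (mul_nonneg (by linarith : (0:ℝ) ≤ c + 1) (sq_nonneg (c*y - 1))),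
      ht]

lemma zw_le {z w rr : ℝ} (hw : 0 ≤ w) (hwr : w ≤ rr) : z * w ≤ max z 0 * rr := by
  rcases le_or_gt z 0 with h | h
  · rw [max_eq_right h]
    nlinarith
  · rw [max_eq_left h.le]
    nlinarith

lemma tanh_eq_exp_half {M : ℝ} :
    Real.tanh (M / 4) = (Real.exp (M/2) - 1) / (Real.exp (M/2) + 1) := by
  rw [Real.tanh_eq_sinh_div_cosh, Real.sinh_eq, Real.cosh_eq]
  have h1 : Real.exp (M/4) > 0 := Real.exp_pos _
  have h2 : Real.exp (-(M/4)) > 0 := Real.exp_pos _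
  have key : Real.exp (M/2) = Real.exp (M/4) * Real.exp (M/4) := by
    rw [← Real.exp_add]; ring_nf
  have key2 : Real.exp (M/4) * Real.exp (-(M/4)) = 1 := by
    rw [← Real.exp_add]; ring_nf; exact Real.exp_zero
  rw [div_eq_div_iff (by positivity) (by positivity)]
  linear_combination (-(Real.exp (-(M/4)))) * key + (-(Real.exp (M/4))) * key2

lemma qmax_aux (qq rh : ℝ) : qq * max (1 - rh) 0 = qq * max (rh - 1) 0 - (qq * rh - qq) := by
  have h := max_zero_sub_max_neg_zero_eq_self (rh - 1)
  have h2 : -(rh - 1) = 1 - rh := by ring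
  rw [h2] at h
  linear_combination (-qq) * h

lemma L1 {ι : Type*} (s : Finset ι) (hs : s.Nonempty) (a b n : ι → ℝ)
    (ha : ∀ T ∈ s, 0 < a T) (hb : ∀ T ∈ s, 0 < b T)
    (M rr ν : ℝ) (hM : 0 ≤ M) (hrr : 0 ≤ rr)
    (hn1 : ∀ T ∈ s, ν ≤ n T) (hn2 : ∀ T ∈ s, n T ≤ ν + rr)
    (hspread : ∀ T ∈ s, ∀ T' ∈ s, a T * b T' ≤ Real.exp M * (a T' * b T)) :
    |(∑ T ∈ s, b T * n T) / (∑ T ∈ s, b T) - (∑ T ∈ s, a T * n T) / (∑ T ∈ s, a T)|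
      ≤ rr * Real.tanh (M / 4) := by
  have hA : 0 < ∑ T ∈ s, a T := Finset.sum_pos ha hs
  have hB : 0 < ∑ T ∈ s, b T := Finset.sum_pos hb hs
  set A := ∑ T ∈ s, a T with hAdef
  set B := ∑ T ∈ s, b T with hBdef
  set q : ι → ℝ := fun T => b T / B with hqdef
  set ρ : ι → ℝ := fun T => (a T / b T) * (B / A) with hρdef
  have hqpos : ∀ T ∈ s, 0 < q T := fun T hT => div_pos (hb T hT) hB
  have hρpos : ∀ T ∈ s, 0 < ρ T := fun T hT =>
    mul_pos (div_pos (ha T hT) (hb T hT)) (div_pos hB hA)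
  have hqρ : ∀ T ∈ s, q T * ρ T = a T / A := by
    intro T hT
    have := (hb T hT).ne'
    calc q T * ρ T = (b T / b T) * (B / B) * (a T / A) := by simp only [hqdef, hρdef]; ring
      _ = a T / A := by rw [div_self this, div_self hB.ne']; ring
  have hsumq : ∑ T ∈ s, q T = 1 := by
    rw [← Finset.sum_div]; exact div_self hB.ne'
  have hsumqρ : ∑ T ∈ s, q T * ρ T = 1 := by
    rw [Finset.sum_congr rfl hqρ, ← Finset.sum_div]; exact div_self hA.ne'
  set x := s.sup' hs ρ with hxdef
  set y := s.inf' hs ρ with hydef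
  have hρx : ∀ T ∈ s, ρ T ≤ x := fun T hT => Finset.le_sup' ρ hT
  have hyρ : ∀ T ∈ s, y ≤ ρ T := fun T hT => Finset.inf'_le ρ hT
  obtain ⟨Tx, hTx, hTxe⟩ := Finset.exists_mem_eq_sup' hs ρ
  obtain ⟨Ty, hTy, hTye⟩ := Finset.exists_mem_eq_inf' hs ρ
  have hy0 : 0 < y := by rw [hydef, hTye]; exact hρpos Ty hTy
  have hy1 : y ≤ 1 := by
    by_contra h
    push_neg at h
    have : (1:ℝ) < ∑ T ∈ s, q T * ρ T := by
      calc (1:ℝ) = ∑ T ∈ s, q T * 1 := by simp [hsumq]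
      _ < ∑ T ∈ s, q T * ρ T := by
          apply Finset.sum_lt_sum_of_nonempty hs
          intro T hT
          exact mul_lt_mul_of_pos_left (lt_of_lt_of_le h (hyρ T hT)) (hqpos T hT)
    rw [hsumqρ] at this; linarith
  have h1x : 1 ≤ x := by
    by_contra h
    push_neg at h
    have : ∑ T ∈ s, q T * ρ T < 1 := by
      calc ∑ T ∈ s, q T * ρ T < ∑ T ∈ s, q T * 1 := by
            apply Finset.sum_lt_sum_of_nonempty hs
            intro T hT
            exact mul_lt_mul_of_pos_left (lt_of_le_of_lt (hρx T hT) h) (hqpos T hT)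
      _ = 1 := by simp [hsumq]
    rw [hsumqρ] at this; linarith
  have hxc : x ≤ Real.exp M * y := by
    rw [hxdef, hydef, hTxe, hTye]
    have hsp := hspread Tx hTx Ty hTy
    have hbx := hb Tx hTx
    have hby := hb Ty hTy
    have hBA : 0 < B / A := div_pos hB hA
    simp only [hρdef]
    rw [← sub_nonneg]
    have key : 0 ≤ Real.exp M * (a Ty / b Ty) - a Tx / b Tx := by
      have expand : Real.exp M * (a Ty / b Ty) - a Tx / b Tx
          = (Real.exp M * (a Ty * b Tx) - a Tx * b Ty) / (b Tx * b Ty) := by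
        field_simp
      rw [expand]
      apply div_nonneg _ (by positivity)
      linarith
    nlinarith
  set d := ∑ T ∈ s, q T * max (ρ T - 1) 0 with hddef
  have hd0 : 0 ≤ d := Finset.sum_nonneg fun T hT =>
    mul_nonneg (hqpos T hT).le (le_max_right _ _)
  have hd' : ∑ T ∈ s, q T * max (1 - ρ T) 0 = d := by
    have step : ∀ T ∈ s, q T * max (1 - ρ T) 0 = q T * max (ρ T - 1) 0 - (q T * ρ T - q T) := by
      intro T hT
      exact qmax_aux (q T) (ρ T)
    rw [Finset.sum_congr rfl step, Finset.sum_sub_distrib, Finset.sum_sub_distrib, hsumqρ, hsumq]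
    simp [hddef]
  have hΔ1 : (∑ T ∈ s, b T * n T) / B = ∑ T ∈ s, q T * n T := by
    rw [Finset.sum_div]
    apply Finset.sum_congr rfl
    intro T hT
    simp only [hqdef]
    ring
  have hΔ2 : (∑ T ∈ s, a T * n T) / A = ∑ T ∈ s, q T * ρ T * n T := by
    rw [Finset.sum_div]
    apply Finset.sum_congr rfl
    intro T hT
    rw [hqρ T hT]
    ring
  have hzero : ∑ T ∈ s, (q T - q T * ρ T) = 0 := by
    rw [Finset.sum_sub_distrib, hsumq, hsumqρ]
    ring
  have hΔ : (∑ T ∈ s, b T * n T) / B - (∑ T ∈ s, a T * n T) / A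
      = ∑ T ∈ s, (q T * (1 - ρ T)) * (n T - ν) := by
    rw [hΔ1, hΔ2]
    have expand : ∀ T ∈ s, (q T * (1 - ρ T)) * (n T - ν)
        = (q T * n T - q T * ρ T * n T) - ν * (q T - q T * ρ T) := by
      intro T hT; ring
    rw [Finset.sum_congr rfl expand, Finset.sum_sub_distrib, Finset.sum_sub_distrib,
      ← Finset.mul_sum, hzero, mul_zero, sub_zero]
  have habs : |(∑ T ∈ s, b T * n T) / B - (∑ T ∈ s, a T * n T) / A| ≤ rr * d := by
    rw [hΔ, abs_le]
    constructor
    · have : -∑ T ∈ s, (q T * (1 - ρ T)) * (n T - ν) = ∑ T ∈ s, (q T * (ρ T - 1)) * (n T - ν) := by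
        rw [← Finset.sum_neg_distrib]
        apply Finset.sum_congr rfl; intro T hT; ring
      rw [neg_le, this]
      calc ∑ T ∈ s, (q T * (ρ T - 1)) * (n T - ν)
          ≤ ∑ T ∈ s, max (q T * (ρ T - 1)) 0 * rr := by
            apply Finset.sum_le_sum
            intro T hT
            exact zw_le (by linarith [hn1 T hT]) (by linarith [hn2 T hT])
        _ = rr * d := by
            rw [hddef, Finset.mul_sum]
            apply Finset.sum_congr rfl
            intro T hT
            rw [mul_max_of_nonneg _ _ (hqpos T hT).le, mul_zero]
            ring
    · calc ∑ T ∈ s, (q T * (1 - ρ T)) * (n T - ν)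
          ≤ ∑ T ∈ s, max (q T * (1 - ρ T)) 0 * rr := by
            apply Finset.sum_le_sum
            intro T hT
            exact zw_le (by linarith [hn1 T hT]) (by linarith [hn2 T hT])
        _ = rr * d := by
            rw [← hd', Finset.mul_sum]
            apply Finset.sum_congr rfl
            intro T hT
            rw [mul_max_of_nonneg _ _ (hqpos T hT).le, mul_zero]
            ring
  have hdle : d ≤ Real.tanh (M / 4) := by
    rw [tanh_eq_exp_half]
    set c := Real.exp (M/2) with hcdef
    have hc : 1 ≤ c := Real.one_le_exp (by linarith)
    have hc2 : c^2 = Real.exp M := by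
      rw [hcdef, pow_two, ← Real.exp_add]
      congr 1; ring
    rcases eq_or_lt_of_le (le_trans hy1 h1x) with h | h
    · have hx1 : x = 1 := le_antisymm (h ▸ hy1) h1x
      have : d = 0 := by
        apply Finset.sum_eq_zero
        intro T hT
        rw [max_eq_right (by linarith [hρx T hT, hx1])]
        ring
      rw [this]
      apply div_nonneg (by linarith) (by linarith)
    · calc d ≤ ∑ T ∈ s, q T * ((x - 1) / (x - y) * (ρ T - y)) := by
            apply Finset.sum_le_sum
            intro T hT
            exact mul_le_mul_of_nonneg_left
              (chord hy0 h hy1 h1x (hyρ T hT) (hρx T hT)) (hqpos T hT).le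
        _ = (x - 1) / (x - y) * (1 - y) := by
            have : ∀ T ∈ s, q T * ((x - 1) / (x - y) * (ρ T - y))
                = (x - 1) / (x - y) * (q T * ρ T - y * q T) := by
              intro T hT; ring
            rw [Finset.sum_congr rfl this, ← Finset.mul_sum, Finset.sum_sub_distrib,
              hsumqρ, ← Finset.mul_sum, hsumq]
            ring
        _ ≤ (c - 1) / (c + 1) := by
            apply chordSum hc hy0 h hy1 h1x
            rw [hc2]
            exact hxc
  calc |(∑ T ∈ s, b T * n T) / B - (∑ T ∈ s, a T * n T) / A| ≤ rr * d := habs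
    _ ≤ rr * Real.tanh (M / 4) := mul_le_mul_of_nonneg_left hdle hrr

lemma dist_split {V : Type*} [DecidableEq V] {G : SimpleGraph V} {a b u : V} (p : G.Walk a b)
    (hlen : p.length = G.dist a b) (hu : u ∈ p.support) :
    G.dist a u + G.dist u b ≤ G.dist a b := by
  have h1 : G.dist a u ≤ (p.takeUntil u hu).length := dist_le _
  have h2 : G.dist u b ≤ (p.dropUntil u hu).length := dist_le _
  have h3 := congrArg Walk.length (p.take_spec hu)
  rw [Walk.length_append] at h3
  omega

lemma tree_adj_dist {V : Type*} [DecidableEq V] {T : SimpleGraph V} (hT : T.IsTree) {u v : V} (h : T.Adj u v)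
    (r : V) : T.dist u r = T.dist v r + 1 ∨ T.dist v r = T.dist u r + 1 := by
  have hc := hT.isConnected
  obtain ⟨p, hp, hplen⟩ := hc.exists_path_of_dist v r
  obtain ⟨p', hp', hplen'⟩ := hc.exists_path_of_dist u r
  have h1 : T.dist u r ≤ T.dist v r + 1 := by
    have := dist_le (Walk.cons h p)
    rw [Walk.length_cons, hplen] at this
    omega
  have h2 : T.dist v r ≤ T.dist u r + 1 := by
    have := dist_le (Walk.cons h.symm p')
    rw [Walk.length_cons, hplen'] at this
    omega
  rcases lt_trichotomy (T.dist u r) (T.dist v r) with hlt | heq | hgt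
  · right; omega
  · exfalso
    by_cases hu : u ∈ p.support
    · have hsplit := dist_split p hplen hu
      have hpos : 0 < T.dist v u := hc.pos_dist_of_ne h.ne'
      omega
    · have hcons : (Walk.cons h p).IsPath := (Walk.cons_isPath_iff _ _).mpr ⟨hp, hu⟩
      have := hT.IsAcyclic.path_unique ⟨p', hp'⟩ ⟨Walk.cons h p, hcons⟩
      have hlen := congrArg (fun q : T.Path u r => q.1.length) this
      simp only [Walk.length_cons] at hlen
      rw [hplen, hplen'] at hlen
      omega
  · left; omega

lemma tree_adj_dist_parent {V : Type*} [DecidableEq V] {T : SimpleGraph V} (hT : T.IsTree)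
    {a b u v : V} (hab : T.Adj a b) (huv : T.Adj u v) (hne : s(u, v) ≠ s(a, b))
    (hua : T.dist u a = T.dist v a + 1) : T.dist u b = T.dist v b + 1 := by
  have hc := hT.isConnected
  rcases tree_adj_dist hT huv b with hgood | hbad
  · exact hgood
  exfalso
  obtain ⟨P, hP, hPlen⟩ := hc.exists_path_of_dist v a
  by_cases hb : b ∈ P.support
  · have hsplit := dist_split P hPlen hb
    have hba : T.dist b a ≤ 1 := by simpa using dist_le hab.symm.toWalk
    have hba1 : 0 < T.dist b a := hc.pos_dist_of_ne hab.ne'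
    have htri : T.dist u a ≤ T.dist u b + T.dist b a := hc.dist_triangle
    omega
  · have hW : (P.concat hab).IsPath := by
      rw [Walk.isPath_def, Walk.support_concat]
      simp [List.nodup_append, hP.support_nodup, hb]
      exact fun x hx hxb => hb (hxb ▸ hx)
    obtain ⟨Q, hQ, hQlen⟩ := hc.exists_path_of_dist u b
    have hvQ : v ∉ Q.support := by
      intro hvin
      have := dist_split Q hQlen hvin
      have hpos : 0 < T.dist u v := hc.pos_dist_of_ne huv.ne
      omega
    have hcons : (Walk.cons huv.symm Q).IsPath := (Walk.cons_isPath_iff _ _).mpr ⟨hQ, hvQ⟩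
    have hEq : P.concat hab = Walk.cons huv.symm Q :=
      congrArg Subtype.val (hT.IsAcyclic.path_unique ⟨P.concat hab, hW⟩ ⟨Walk.cons huv.symm Q, hcons⟩)
    have huW : u ∈ (P.concat hab).support := by
      rw [hEq]
      simp [Walk.support_cons]
    rw [Walk.support_concat, List.mem_append] at huW
    rcases huW with hu | hu
    · have hsplit := dist_split P hPlen hu
      have hpos : 0 < T.dist v u := hc.pos_dist_of_ne huv.ne'
      omega
    · simp only [List.mem_singleton] at hu
      subst hu
      have hba : T.dist u a ≤ 1 := by simpa using dist_le hab.symm.toWalk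
      have hva : T.dist v a = 0 := by omega
      have hvaeq : v = a := (hc.dist_eq_zero_iff).mp hva
      subst hvaeq
      exact hne (Sym2.eq_swap)


lemma delete_nonbridge_connected {V : Type*} {G : SimpleGraph V} (hG : G.Connected)
    {x y : V} (hre : (G \ fromEdgeSet {s(x, y)}).Reachable x y) :
    (G \ fromEdgeSet {s(x, y)}).Connected := by
  rw [connected_iff]
  refine ⟨?_, hG.nonempty⟩
  intro a b
  obtain ⟨p⟩ := hG.preconnected a b
  induction p with
  | nil => exact Reachable.refl _
  | @cons u u' w h q ihp =>
    refine Reachable.trans ?_ ihp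
    by_cases hxy : s(u, u') = s(x, y)
    · rw [Sym2.eq_iff] at hxy
      rcases hxy with ⟨rfl, rfl⟩ | ⟨rfl, rfl⟩
      · exact hre
      · exact hre.symm
    · refine Adj.reachable ?_
      rw [sdiff_adj]
      refine ⟨h, ?_⟩
      rw [fromEdgeSet_adj]
      rintro ⟨hmem, -⟩
      exact hxy (by simpa using hmem)

lemma exists_spanning_tree_aux {V : Type*} [Fintype V] [DecidableEq V] :
    ∀ (n : ℕ) (G : SimpleGraph V), G.edgeSet.ncard = n → G.Connected →
      ∃ T, T ≤ G ∧ T.IsTree := by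
  intro n
  induction n using Nat.strong_induction_on with
  | _ n ih =>
    intro G hcard hG
    by_cases hac : G.IsAcyclic
    · exact ⟨G, le_refl G, ⟨hG, hac⟩⟩
    · simp only [IsAcyclic] at hac
      push_neg at hac
      obtain ⟨v, c, hc⟩ := hac
      have hlen := hc.three_le_length
      have hne : c.edges ≠ [] := by
        intro h
        have h2 := c.length_edges
        rw [h] at h2
        simp at h2
        omega
      obtain ⟨e, he⟩ := List.exists_mem_of_ne_nil c.edges hne
      have heG : e ∈ G.edgeSet := c.edges_subset_edgeSet he
      induction e with
      | _ x y =>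
        have hre : (G \ fromEdgeSet {s(x, y)}).Reachable x y :=
          (adj_and_reachable_delete_edges_iff_exists_cycle.mpr ⟨v, c, hc, he⟩).2
        have hconn' := delete_nonbridge_connected hG hre
        have hes : (G \ fromEdgeSet {s(x, y)}).edgeSet = G.edgeSet \ {s(x, y)} := by
          rw [edgeSet_sdiff, edgeSet_fromEdgeSet, edgeSet_sdiff_sdiff_isDiag]
        have hfin : G.edgeSet.Finite := Set.toFinite _
        have hcard' : (G \ fromEdgeSet {s(x, y)}).edgeSet.ncard < n := by
          rw [hes, Set.ncard_diff_singleton_of_mem heG]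
          have : 0 < n := by
            rw [← hcard]
            exact Set.ncard_pos hfin |>.mpr ⟨_, heG⟩
          omega
        obtain ⟨T, hT1, hT2⟩ := ih _ hcard' _ rfl hconn'
        exact ⟨T, le_trans hT1 sdiff_le, hT2⟩
section C
variable {V : Type*} [Fintype V] [DecidableEq V] {T : SimpleGraph V}

/-- the set of darts of `T` oriented towards `r` -/
noncomputable def oriT (T : SimpleGraph V) [Fintype V] (r : V) : Finset (V × V) :=
  Finset.univ.filter
      (fun p : V × V => T.Adj p.1 p.2 ∧ T.dist p.2 r + 1 = T.dist p.1 r)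

lemma treeWeight_eq_prod_oriT (W : V → V → ℝ) (r : V) :
    treeWeight W T r = ∏ p ∈ oriT T r, W p.2 p.1 := rfl

lemma adj_dist_one {a b : V} (hT : T.IsTree) (hab : T.Adj a b) : T.dist a b = 1 := by
  have h1 : T.dist a b ≤ 1 := by simpa using dist_le hab.toWalk
  have h2 : 0 < T.dist a b := hT.isConnected.pos_dist_of_ne hab.ne
  omega

lemma oriT_move {a b : V} (hT : T.IsTree) (hab : T.Adj a b) :
    oriT T a = insert (b, a) ((oriT T b).erase (a, b)) := by
  ext p
  obtain ⟨p1, p2⟩ := p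
  simp only [oriT, Finset.mem_insert, Finset.mem_erase, Finset.mem_filter, Finset.mem_univ,
    true_and, Prod.mk.injEq, ne_eq]
  constructor
  · rintro ⟨hadj, hdist⟩
    by_cases h1 : (p1, p2) = (b, a)
    · rw [Prod.ext_iff] at h1; exact Or.inl h1
    · right
      refine ⟨?_, hadj, ?_⟩
      · intro ⟨e1, e2⟩
        subst e1; subst e2
        rw [SimpleGraph.dist_self, adj_dist_one hT hab.symm] at hdist
        omega
      · by_cases hs : s(p1, p2) = s(a, b)
        · exfalso
          rw [Sym2.eq_iff] at hs
          rcases hs with ⟨rfl, rfl⟩ | ⟨rfl, rfl⟩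
          · rw [SimpleGraph.dist_self, adj_dist_one hT hab.symm] at hdist
            omega
          · exact h1 rfl
        · have := tree_adj_dist_parent hT hab hadj hs hdist.symm
          omega
  · rintro (⟨rfl, rfl⟩ | ⟨hne, hadj, hdist⟩)
    · exact ⟨hab.symm, by rw [SimpleGraph.dist_self, adj_dist_one hT hab.symm]⟩
    · refine ⟨hadj, ?_⟩
      by_cases hs : s(p1, p2) = s(a, b)
      · exfalso
        rw [Sym2.eq_iff] at hs
        rcases hs with ⟨rfl, rfl⟩ | ⟨rfl, rfl⟩
        · exact hne ⟨rfl, rfl⟩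
        · rw [SimpleGraph.dist_self, adj_dist_one hT hab] at hdist
          omega
      · have := tree_adj_dist_parent hT hab.symm hadj (by rwa [Sym2.eq_swap (a := a)] at hs) hdist.symm
        omega
end C

section D
variable {V : Type*} [Fintype V] [DecidableEq V] {T : SimpleGraph V}

lemma mem_oriT_ab {a b : V} (hT : T.IsTree) (hab : T.Adj a b) : (a, b) ∈ oriT T b := by
  simp [oriT, hab, SimpleGraph.dist_self, adj_dist_one hT hab]

lemma treeWeight_adj (W : V → V → ℝ) {a b : V} (hT : T.IsTree) (hab : T.Adj a b) :
    treeWeight W T a * W b a = treeWeight W T b * W a b := by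
  rw [treeWeight_eq_prod_oriT, treeWeight_eq_prod_oriT, oriT_move hT hab]
  rw [Finset.prod_insert (by simp [oriT, SimpleGraph.dist_self])]
  rw [← Finset.mul_prod_erase _ _ (mem_oriT_ab hT hab)]
  ring

omit [Fintype V] [DecidableEq V] in
lemma walkWeight_nil {W : V → V → ℝ} {G : SimpleGraph V} {u : V} :
    walkWeight W (Walk.nil : G.Walk u u) = 1 := by simp [walkWeight]

omit [Fintype V] [DecidableEq V] in
lemma walkWeight_cons {W : V → V → ℝ} {G : SimpleGraph V} {u v w : V} (h : G.Adj u v)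
    (p : G.Walk v w) : walkWeight W (Walk.cons h p) = W v u * walkWeight W p := by
  simp [walkWeight]

omit [Fintype V] [DecidableEq V] in
lemma walkWeight_append {W : V → V → ℝ} {G : SimpleGraph V} {u v w : V} (p : G.Walk u v)
    (q : G.Walk v w) : walkWeight W (p.append q) = walkWeight W p * walkWeight W q := by
  simp [walkWeight, Walk.darts_append]

lemma treeWeight_mul_walkWeight (W : V → V → ℝ) (hT : T.IsTree) {c d : V} (p : T.Walk c d) :
    treeWeight W T c * walkWeight W p = treeWeight W T d * walkWeight W p.reverse := by
  induction p with
  | nil => simp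
  | @cons u v w h q ih =>
    rw [walkWeight_cons, Walk.reverse_cons, walkWeight_append, walkWeight_cons]
    have hadj := treeWeight_adj W hT h
    rw [walkWeight_nil]
    linear_combination (walkWeight W q) * hadj + W u v * ih

lemma card_oriT_filter (hT : T.IsTree) (r : V) (S : Set (Sym2 V)) :
    ((oriT T r).filter (fun p => s(p.1, p.2) ∈ S)).card
      = (T.edgeFinset.filter (fun e => e ∈ S)).card := by
  apply Finset.card_bij (fun p _ => s(p.1, p.2))
  · intro p hp
    simp only [Finset.mem_filter, oriT, Finset.mem_univ, true_and] at hp ⊢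
    exact ⟨SimpleGraph.mem_edgeFinset.mpr ((T.mem_edgeSet).mpr hp.1.1), hp.2⟩
  · intro p hp q hq heq
    simp only [Finset.mem_filter, oriT, Finset.mem_univ, true_and] at hp hq
    rw [Sym2.eq_iff] at heq
    rcases heq with ⟨h1, h2⟩ | ⟨h1, h2⟩
    · exact Prod.ext h1 h2
    · exfalso
      obtain ⟨⟨hadj, hd⟩, _⟩ := hp
      obtain ⟨⟨hadj', hd'⟩, _⟩ := hq
      rw [← h1, ← h2] at hd'
      omega
  · intro e he
    simp only [Finset.mem_filter, SimpleGraph.mem_edgeFinset] at he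
    obtain ⟨he1, he2⟩ := he
    induction e with
    | _ u v =>
      have hadj : T.Adj u v := he1
      rcases tree_adj_dist hT hadj r with hd | hd
      · exact ⟨(u, v), by simp [Finset.mem_filter, oriT, hadj, hd, he2], rfl⟩
      · refine ⟨(v, u), by simp [Finset.mem_filter, oriT, hadj.symm, hd, Sym2.eq_swap]; exact (Sym2.eq_swap ▸ he2), by rw [Sym2.eq_swap]⟩
end D


section F
variable {V : Type*}

lemma mem_oriT_adj [Fintype V] {T : SimpleGraph V} {r : V} {p : V × V}
    (hp : p ∈ oriT T r) : T.Adj p.1 p.2 := by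
  simp only [oriT, Finset.mem_filter] at hp
  exact hp.2.1

lemma walkWeight_pos {W : V → V → ℝ} {G : SimpleGraph V}
    (hpos : ∀ a b, G.Adj a b → 0 < W b a) {u v : V} (p : G.Walk u v) :
    0 < walkWeight W p := by
  induction p with
  | nil => rw [walkWeight_nil]; exact one_pos
  | cons hadj q ih =>
    rw [walkWeight_cons]
    exact mul_pos (hpos _ _ hadj) ih

lemma treeWeight_pos [Fintype V] [DecidableEq V] {W : V → V → ℝ} {T : SimpleGraph V}
    (hpos : ∀ a b, T.Adj a b → 0 < W b a) (k : V) : 0 < treeWeight W T k := by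
  rw [treeWeight_eq_prod_oriT]
  apply Finset.prod_pos
  intro p hp
  exact hpos _ _ (mem_oriT_adj hp)

lemma rates_pos (G : SimpleGraph V) (Bp : V → V → ℝ) (Ep : V → ℝ) (Fp : V → V → ℝ)
    {a b : V} (h : G.Adj a b) : 0 < rates G Bp Ep Fp b a := by
  simp only [rates, h.symm, if_true]
  exact Real.exp_pos _

lemma walkWeight_transfer (W : V → V → ℝ) {G H : SimpleGraph V} {u v : V} (p : G.Walk u v) :
    ∀ (h : ∀ e ∈ p.edges, e ∈ H.edgeSet), walkWeight W (p.transfer H h) = walkWeight W p := by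
  induction p with
  | nil => intro h; rfl
  | cons hadj q ih =>
    intro h
    rw [walkWeight_cons, ← ih (fun e he => h e (List.mem_cons_of_mem _ he))]
    exact walkWeight_cons _ _

lemma treeWeight_fact [Fintype V] [DecidableEq V] (G T : SimpleGraph V) (hle : T ≤ G)
    (hT : T.IsTree) (Bp : V → V → ℝ) (Ep : V → ℝ) (Fp : V → V → ℝ) (S : Set (Sym2 V)) (t : ℝ) (k : V) :
    treeWeight (rates G (updBadd Bp S t) Ep Fp) T k
      = Real.exp (-(t * ((T.edgeFinset.filter (fun e => e ∈ S)).card : ℝ)))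
        * treeWeight (rates G Bp Ep Fp) T k := by
  classical
  rw [treeWeight_eq_prod_oriT, treeWeight_eq_prod_oriT]
  have step : ∀ p ∈ oriT T k, rates G (updBadd Bp S t) Ep Fp p.2 p.1
      = Real.exp (-(if s(p.1, p.2) ∈ S then t else 0)) * rates G Bp Ep Fp p.2 p.1 := by
    intro p hp
    have hadj : G.Adj p.2 p.1 := (hle (mem_oriT_adj hp)).symm
    have hsym : s(p.2, p.1) = s(p.1, p.2) := Sym2.eq_swap
    simp only [rates, hadj, if_true, updBadd, hsym, ← Real.exp_add]
    by_cases hS : s(p.1, p.2) ∈ S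
    · simp only [hS, if_true]
      congr 1
      ring
    · simp only [hS, if_false]
      congr 1
      ring
  rw [Finset.prod_congr rfl step, Finset.prod_mul_distrib]
  congr 1
  rw [← Real.exp_sum]
  congr 1
  have : ∑ p ∈ oriT T k, -(if s(p.1, p.2) ∈ S then t else 0)
      = -(∑ p ∈ oriT T k, (if s(p.1, p.2) ∈ S then t else 0)) := by
    rw [← Finset.sum_neg_distrib]
  rw [this, ← Finset.sum_filter, Finset.sum_const, nsmul_eq_mul,
    card_oriT_filter hT k S]
  ring

lemma ratio_identity [Fintype V] [DecidableEq V] {G T : SimpleGraph V} (W : V → V → ℝ)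
    (hle : T ≤ G) (hT : T.IsTree) (i j : V) :
    ∃ p : G.Walk i j, p.IsPath ∧
      treeWeight W T i * walkWeight W p = treeWeight W T j * walkWeight W p.reverse := by
  obtain ⟨q, hq, -⟩ := hT.isConnected.exists_path_of_dist i j
  have hsub : ∀ e ∈ q.edges, e ∈ G.edgeSet := by
    intro e he
    exact SimpleGraph.edgeSet_mono hle (q.edges_subset_edgeSet he)
  refine ⟨q.transfer G hsub, hq.transfer hsub, ?_⟩
  rw [walkWeight_transfer, SimpleGraph.Walk.reverse_transfer, walkWeight_transfer]
  exact treeWeight_mul_walkWeight W hT q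

lemma fbtw_bddAbove [Fintype V] [DecidableEq V] (W : V → V → ℝ) (G : SimpleGraph V)
    (i j : V) :
    BddAbove {x : ℝ | ∃ (p : G.Walk i j) (q : G.Walk j i), p.IsPath ∧ q.IsPath ∧
      x = |Real.log (walkWeight W p * walkWeight W q /
            (walkWeight W p.reverse * walkWeight W q.reverse))|} := by
  classical
  have hset : {x : ℝ | ∃ (p : G.Walk i j) (q : G.Walk j i), p.IsPath ∧ q.IsPath ∧
      x = |Real.log (walkWeight W p * walkWeight W q /
            (walkWeight W p.reverse * walkWeight W q.reverse))|}
      = Set.range (fun pq : G.Path i j × G.Path j i =>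
          |Real.log (walkWeight W pq.1.1 * walkWeight W pq.2.1 /
            (walkWeight W pq.1.1.reverse * walkWeight W pq.2.1.reverse))|) := by
    ext x
    constructor
    · rintro ⟨p, q, hp, hq, rfl⟩
      exact ⟨(⟨p, hp⟩, ⟨q, hq⟩), rfl⟩
    · rintro ⟨⟨p, q⟩, rfl⟩
      exact ⟨p.1, q.1, p.2, q.2, rfl⟩
  rw [hset]
  exact (Set.finite_range _).bddAbove

lemma count_bounds [Fintype V] [DecidableEq V] {G T : SimpleGraph V} (hle : T ≤ G)
    (hT : T.IsTree) (S : Set (Sym2 V)) (r : ℕ)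
    (hr : G.edgeSet.ncard + 1 = r + Fintype.card V) :
    (G.edgeFinset.filter (fun e => e ∈ S)).card
      ≤ (T.edgeFinset.filter (fun e => e ∈ S)).card + r
    ∧ (T.edgeFinset.filter (fun e => e ∈ S)).card
      ≤ (G.edgeFinset.filter (fun e => e ∈ S)).card := by
  classical
  have hTsub : T.edgeFinset ⊆ G.edgeFinset := SimpleGraph.edgeFinset_mono hle
  have hsub2 : T.edgeFinset.filter (fun e => e ∈ S) ⊆ G.edgeFinset.filter (fun e => e ∈ S) :=
    Finset.filter_subset_filter _ hTsub
  refine ⟨?_, Finset.card_le_card hsub2⟩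
  have hsdiff : (G.edgeFinset.filter (fun e => e ∈ S)) \ (T.edgeFinset.filter (fun e => e ∈ S))
      ⊆ G.edgeFinset \ T.edgeFinset := by
    intro e he
    rw [Finset.mem_sdiff] at he ⊢
    obtain ⟨he1, he2⟩ := he
    rw [Finset.mem_filter] at he1
    refine ⟨he1.1, fun hmem => he2 ?_⟩
    rw [Finset.mem_filter]
    exact ⟨hmem, he1.2⟩
  have hc1 := Finset.card_le_card hsdiff
  rw [Finset.card_sdiff_of_subset hsub2, Finset.card_sdiff_of_subset hTsub] at hc1
  have hTcard : T.edgeFinset.card + 1 = Fintype.card V := hT.card_edgeFinset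
  have hGcard : G.edgeSet.ncard = G.edgeFinset.card := by
    rw [← SimpleGraph.coe_edgeFinset, Set.ncard_coe_finset]
  have hV : 1 ≤ Fintype.card V := by
    have : Nonempty V := hT.isConnected.nonempty
    exact Fintype.card_pos
  have hTG := Finset.card_le_card hTsub
  omega

end F

end AUX

/-- if the connected graph `G` has `r` independent cycles
(`r = |E| - |V| + 1`), then for any set `S` of edges,
`|∑_{{m,n}∈S} ∂ln(π_i/π_j)/∂B_mn| ≤ r tanh(F_{i↔j}/4)`. -/
theorem stmt11 {V : Type*} [Fintype V] [DecidableEq V]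
    (G : SimpleGraph V) (hG : G.Connected)
    (Bp : V → V → ℝ) (Ep : V → ℝ) (Fp : V → V → ℝ)
    (hB : ∀ i j, Bp i j = Bp j i) (hF : ∀ i j, Fp i j = -Fp j i)
    (r : ℕ) (hr : G.edgeSet.ncard + 1 = r + Fintype.card V)
    (S : Set (Sym2 V)) (hS : S ⊆ G.edgeSet)
    (i j : V) :
    |deriv (fun t =>
        Real.log (piP G (updBadd Bp S t) Ep Fp i /
                  piP G (updBadd Bp S t) Ep Fp j)) 0|
      ≤ (r : ℝ) * Real.tanh (Fbtw (rates G Bp Ep Fp) G i j / 4) := by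
  classical
  obtain ⟨T0, hT0le, hT0tree⟩ := exists_spanning_tree_aux G.edgeSet.ncard G rfl hG
  set W0 : V → V → ℝ := rates G Bp Ep Fp with hW0
  set 𝒯 : Finset (SimpleGraph V) :=
    Finset.univ.filter (fun T : SimpleGraph V => IsSpanningTree G T) with h𝒯def
  have h𝒯ne : 𝒯.Nonempty := ⟨T0, by rw [h𝒯def]; exact Finset.mem_filter.mpr ⟨Finset.mem_univ _, hT0le, hT0tree⟩⟩
  have hmem : ∀ T ∈ 𝒯, T ≤ G ∧ T.IsTree := by
    intro T hT
    rw [h𝒯def] at hT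
    exact (Finset.mem_filter.mp hT).2
  set m : SimpleGraph V → ℕ := fun T => (T.edgeFinset.filter (fun e => e ∈ S)).card with hm
  set c : SimpleGraph V → V → ℝ := fun T k => treeWeight W0 T k with hc
  have hcpos : ∀ T ∈ 𝒯, ∀ k, 0 < c T k := by
    intro T hT k
    exact treeWeight_pos (fun a b hab => rates_pos G Bp Ep Fp ((hmem T hT).1 hab)) k
  set g : V → ℝ → ℝ := fun k t => ∑ T ∈ 𝒯, Real.exp (-(t * (m T : ℝ))) * c T k with hg
  have hsum : ∀ (t : ℝ) (k : V), sumTrees (rates G (updBadd Bp S t) Ep Fp) G k = g k t := by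
    intro t k
    unfold sumTrees
    rw [← h𝒯def]
    exact Finset.sum_congr rfl
      (fun T hT => treeWeight_fact G T (hmem T hT).1 (hmem T hT).2 Bp Ep Fp S t k)
  have hgpos : ∀ k t, 0 < g k t := fun k t =>
    Finset.sum_pos (fun T hT => mul_pos (Real.exp_pos _) (hcpos T hT k)) h𝒯ne
  have hVne : Nonempty V := hG.nonempty
  have hfun : (fun t => Real.log (piP G (updBadd Bp S t) Ep Fp i /
      piP G (updBadd Bp S t) Ep Fp j)) = fun t => Real.log (g i t) - Real.log (g j t) := by
    funext t
    have hD : 0 < ∑ l : V, sumTrees (rates G (updBadd Bp S t) Ep Fp) G l := by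
      apply Finset.sum_pos (fun l _ => by rw [hsum]; exact hgpos l t) Finset.univ_nonempty
    unfold piP mttPi
    have key : sumTrees (rates G (updBadd Bp S t) Ep Fp) G i /
        (∑ l : V, sumTrees (rates G (updBadd Bp S t) Ep Fp) G l) /
        (sumTrees (rates G (updBadd Bp S t) Ep Fp) G j /
        (∑ l : V, sumTrees (rates G (updBadd Bp S t) Ep Fp) G l)) = g i t / g j t := by
      rw [hsum, hsum]
      field_simp
    rw [key, Real.log_div (hgpos i t).ne' (hgpos j t).ne']
  rw [hfun]
  have hterm : ∀ (k : V), ∀ T ∈ 𝒯,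
      HasDerivAt (fun t : ℝ => Real.exp (-(t * (m T : ℝ))) * c T k) ((-(m T : ℝ)) * c T k) 0 := by
    intro k T hT
    have h1 : HasDerivAt (fun t : ℝ => -(t * (m T : ℝ))) (-(m T : ℝ)) 0 :=
      (hasDerivAt_mul_const _).neg
    have h2 := h1.exp
    simp only [zero_mul, neg_zero, Real.exp_zero, one_mul] at h2
    exact h2.mul_const _
  have hgd : ∀ k, HasDerivAt (g k) (∑ T ∈ 𝒯, (-(m T : ℝ)) * c T k) 0 :=
    fun k => HasDerivAt.fun_sum (hterm k)
  have hderiv := ((hgd i).log (hgpos i 0).ne').sub ((hgd j).log (hgpos j 0).ne')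
  have hderiv' : HasDerivAt (fun t => Real.log (g i t) - Real.log (g j t)) _ 0 := hderiv
  rw [hderiv'.deriv]
  have hg0 : ∀ k, g k 0 = ∑ T ∈ 𝒯, c T k := by
    intro k
    apply Finset.sum_congr rfl
    intro T hT
    simp
  have hnegs : ∀ k, ∑ T ∈ 𝒯, (-(m T : ℝ)) * c T k = -∑ T ∈ 𝒯, c T k * (m T : ℝ) := by
    intro k
    rw [← Finset.sum_neg_distrib]
    apply Finset.sum_congr rfl
    intro T hT
    ring
  rw [hnegs i, hnegs j, hg0 i, hg0 j, neg_div, neg_div, neg_sub_neg]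
  have hbounds := fun T (hT : T ∈ 𝒯) => count_bounds (hmem T hT).1 (hmem T hT).2 S r hr
  have hWpos : ∀ (u v : V) (w : G.Walk u v), 0 < walkWeight W0 w := fun u v w =>
    walkWeight_pos (fun a b hab => rates_pos G Bp Ep Fp hab) w
  have hMnn : 0 ≤ Fbtw W0 G i j := by
    obtain ⟨p, hp, -⟩ := hG.exists_path_of_dist i j
    obtain ⟨q, hq, -⟩ := hG.exists_path_of_dist j i
    refine le_trans (abs_nonneg (Real.log (walkWeight W0 p * walkWeight W0 q /
      (walkWeight W0 p.reverse * walkWeight W0 q.reverse)))) ?_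
    exact le_csSup (fbtw_bddAbove W0 G i j) ⟨p, q, hp, hq, rfl⟩
  have hspread : ∀ T ∈ 𝒯, ∀ T' ∈ 𝒯,
      c T i * c T' j ≤ Real.exp (Fbtw W0 G i j) * (c T' i * c T j) := by
    intro T hT T' hT'
    obtain ⟨p, hp, hpId⟩ := ratio_identity W0 (hmem T hT).1 (hmem T hT).2 i j
    obtain ⟨p', hp', hpId'⟩ := ratio_identity W0 (hmem T' hT').1 (hmem T' hT').2 i j
    have h1 := hWpos i j p
    have h2 := hWpos j i p.reverse
    have h3 := hWpos i j p'
    have h4 := hWpos j i p'.reverse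
    set R := walkWeight W0 p' * walkWeight W0 p.reverse /
      (walkWeight W0 p'.reverse * walkWeight W0 p) with hR
    have hRpos : 0 < R := div_pos (mul_pos h3 h2) (mul_pos h4 h1)
    have hid : c T i * c T' j = R * (c T' i * c T j) := by
      rw [hR, div_mul_eq_mul_div, eq_div_iff (mul_pos h4 h1).ne']
      linear_combination (walkWeight W0 p'.reverse * c T' j) * hpId
        - (walkWeight W0 p.reverse * c T j) * hpId'
    have hmem' : |Real.log (walkWeight W0 p' * walkWeight W0 p.reverse /
        (walkWeight W0 p'.reverse * walkWeight W0 p.reverse.reverse))| ∈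
        {x : ℝ | ∃ (a : G.Walk i j) (b : G.Walk j i), a.IsPath ∧ b.IsPath ∧
          x = |Real.log (walkWeight W0 a * walkWeight W0 b /
            (walkWeight W0 a.reverse * walkWeight W0 b.reverse))|} :=
      ⟨p', p.reverse, hp', hp.reverse, rfl⟩
    rw [SimpleGraph.Walk.reverse_reverse] at hmem'
    have hMle : Real.log R ≤ Fbtw W0 G i j := by
      refine le_trans (le_abs_self _) ?_
      exact le_csSup (fbtw_bddAbove W0 G i j) hmem'
    have hRle : R ≤ Real.exp (Fbtw W0 G i j) := by
      rw [← Real.exp_log hRpos]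
      exact Real.exp_le_exp.mpr hMle
    rw [hid]
    exact mul_le_mul_of_nonneg_right hRle
      (le_of_lt (mul_pos (hcpos T' hT' i) (hcpos T hT j)))
  have hn1 : ∀ T ∈ 𝒯, ((G.edgeFinset.filter (fun e => e ∈ S)).card : ℝ) - r ≤ (m T : ℝ) := by
    intro T hT
    have h' : ((G.edgeFinset.filter (fun e => e ∈ S)).card : ℝ)
        ≤ (m T : ℝ) + (r : ℝ) := by exact_mod_cast (hbounds T hT).1
    linarith
  have hn2 : ∀ T ∈ 𝒯, (m T : ℝ) ≤ (((G.edgeFinset.filter (fun e => e ∈ S)).card : ℝ) - r) + r := by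
    intro T hT
    have h' : (m T : ℝ) ≤ ((G.edgeFinset.filter (fun e => e ∈ S)).card : ℝ) := by
      exact_mod_cast (hbounds T hT).2
    linarith
  exact L1 𝒯 h𝒯ne (fun T => c T i) (fun T => c T j) (fun T => (m T : ℝ))
    (fun T hT => hcpos T hT i) (fun T hT => hcpos T hT j)
    (Fbtw W0 G i j) (r : ℝ) (((G.edgeFinset.filter (fun e => e ∈ S)).card : ℝ) - r)
    hMnn (by positivity) hn1 hn2 hspread
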